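/- Let G=(V,E) be a simple directed graph on V=[p] containing all self-loops, and let C be a symmetric positive definite p×p matrix. Then the graphical continuous Lyapunov model M_{G,C} is a closed subset of PD_p in the subspace topology, i.e., it is relatively closed in the set of symmetric positive definite matrices. -/

import Mathlib

open Matrix MeasureTheory Filter

/-- A real square matrix is *stable* if every eigenvalue (over `ℂ`) has strictly
negative real part. -/
def IsStableMat {n : Type*} [Fintype n] [DecidableEq n] (M : Matrix n n ℝ) : Prop :=
  ∀ μ ∈ spectrum ℂ (M.map (algebraMap ℝ ℂ)), μ.re < 0

/-- `M ∈ ℝ^E`: the matrix `M` is supported on the directed graph with edge set `E`,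
i.e. `M j i = 0` whenever `(i, j) ∉ E`. -/
def InSupp {n : Type*} (E : Set (n × n)) (M : Matrix n n ℝ) : Prop :=
  ∀ i j : n, (i, j) ∉ E → M j i = 0

/-- The graphical continuous Lyapunov model `M_{G,C}`: positive definite matrices `S`
such that `M * S + S * Mᵀ + C = 0` for some `M ∈ ℝ^E`. -/
def LyapModel {n : Type*} [Fintype n] [DecidableEq n] (E : Set (n × n))
    (C : Matrix n n ℝ) : Set (Matrix n n ℝ) :=
  {S | S.PosDef ∧ ∃ M : Matrix n n ℝ, InSupp E M ∧ M * S + S * Mᵀ + C = 0}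

/-- Global identifiability: no two stable matrices supported on `E` yield the same
solution of the Lyapunov equation.  (Since for stable `M` the Lyapunov equation has a
unique positive definite solution `Σ(M,C)`, this is equivalent to every fiber
`F_{G,C}(M₀)` being the singleton `{M₀}`.) -/
def GloballyIdentifiable {n : Type*} [Fintype n] [DecidableEq n] (E : Set (n × n))
    (C : Matrix n n ℝ) : Prop :=
  ∀ M₁ M₂ : Matrix n n ℝ,
    InSupp E M₁ → IsStableMat M₁ → InSupp E M₂ → IsStableMat M₂ →
    ∀ S : Matrix n n ℝ, S.PosDef →
      M₁ * S + S * M₁ᵀ + C = 0 → M₂ * S + S * M₂ᵀ + C = 0 → M₁ = M₂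

/-- A directed graph is *simple* if it has no 2-cycles between distinct nodes. -/
def IsSimpleDigraph {n : Type*} (E : Set (n × n)) : Prop :=
  ∀ i j : n, i ≠ j → (i, j) ∈ E → (j, i) ∉ E

/-- The fiber `F_{G,C}(M₀)`: all stable matrices supported on `E` whose Lyapunov
solution coincides with that of `M₀`, i.e. some positive definite `S` solves the
Lyapunov equation for both `M₀` and `M`. -/
def Fiber {n : Type*} [Fintype n] [DecidableEq n] (E : Set (n × n))
    (C M₀ : Matrix n n ℝ) : Set (Matrix n n ℝ) :=
  {M | InSupp E M ∧ IsStableMat M ∧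
    ∃ S : Matrix n n ℝ, S.PosDef ∧ M₀ * S + S * M₀ᵀ + C = 0 ∧ M * S + S * Mᵀ + C = 0}

/-- The identification of the coordinate space `ℝ^{|E|}` with the matrices in `ℝ^E`:
the coordinate attached to an edge `(i,j)` is the entry `M j i`. -/
def edgeMatrix {p : ℕ} (E : Finset (Fin p × Fin p)) (f : E → ℝ) :
    Matrix (Fin p) (Fin p) ℝ :=
  fun j i => if h : (i, j) ∈ E then f ⟨(i, j), h⟩ else 0

/-- Generic identifiability: the set of parameter vectors `f ∈ ℝ^{|E|}` whose matrix
is stable but whose fiber is not a singleton is a Lebesgue null set. -/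
def GenericallyIdentifiable {p : ℕ} (E : Finset (Fin p × Fin p))
    (C : Matrix (Fin p) (Fin p) ℝ) : Prop :=
  volume {f : E → ℝ | IsStableMat (edgeMatrix E f) ∧
    Fiber (E : Set (Fin p × Fin p)) C (edgeMatrix E f) ≠ {edgeMatrix E f}} = 0

set_option maxHeartbeats 1000000 in
theorem lyap_inj {p : ℕ} {E : Set (Fin p × Fin p)} (hsimple : IsSimpleDigraph E)
    {S M : Matrix (Fin p) (Fin p) ℝ} (hS : S.PosDef) (hM : InSupp E M)
    (h : M * S + S * Mᵀ = 0) : M = 0 := by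
  obtain ⟨W, hWpsd, -, hWW⟩ := open scoped MatrixOrder in
    CFC.exists_sqrt_of_isSelfAdjoint_of_quasispectrumRestricts hS.posSemidef.isHermitian
      (QuasispectrumRestricts.nnreal_of_nonneg hS.posSemidef.nonneg)
  have hWsym : Wᵀ = W := by
    have h1 : W.IsHermitian := hWpsd
    ext i j
    exact congrFun (congrFun h1.eq i) j
  have hdet : IsUnit W.det := by
    have h2 : W.det * W.det = S.det := by rw [← Matrix.det_mul, hWW]
    have h3 := hS.det_pos
    refine isUnit_iff_ne_zero.2 fun h0 => ?_
    rw [h0, mul_zero] at h2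
    exact absurd h2.symm (ne_of_gt h3)
  have hWWinv : W * W⁻¹ = 1 := Matrix.mul_nonsing_inv W hdet
  have hWinvW : W⁻¹ * W = 1 := Matrix.nonsing_inv_mul W hdet
  set N := W⁻¹ * (M * W) with hNdef
  have hsum : N + W * (Mᵀ * W⁻¹) = 0 := by
    have h4 : W⁻¹ * (M * S + S * Mᵀ) * W⁻¹ = 0 := by rw [h, Matrix.mul_zero, Matrix.zero_mul]
    rw [hNdef, ← h4, ← hWW]
    simp only [Matrix.add_mul, Matrix.mul_add, Matrix.mul_assoc]
    rw [Matrix.nonsing_inv_mul_cancel_left _ _ hdet, hWWinv, Matrix.mul_one]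
  have hNt : Nᵀ = -N := by
    have h5 : Nᵀ = W * (Mᵀ * W⁻¹) := by
      rw [hNdef]
      simp [Matrix.transpose_mul, Matrix.transpose_nonsing_inv, hWsym, Matrix.mul_assoc]
    exact h5.trans (eq_neg_of_add_eq_zero_right hsum)
  -- trace identities
  have htr1 : (M * M).trace = (N * N).trace := by
    have h6 : N * N = W⁻¹ * (M * M) * W := by
      rw [hNdef]
      simp only [Matrix.mul_assoc]
      rw [Matrix.mul_nonsing_inv_cancel_left _ _ hdet]
    rw [h6, Matrix.trace_mul_cycle, ← Matrix.mul_assoc, hWWinv, Matrix.one_mul]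
  have htr2 : (N * N).trace = -((Nᵀ * N).trace) := by
    rw [hNt, Matrix.neg_mul, Matrix.trace_neg, neg_neg]
  have htr3 : (Nᵀ * N).trace = ∑ i, ∑ j, (N j i) ^ 2 := by
    simp [Matrix.trace, Matrix.mul_apply, Matrix.diag, sq]
  have htr4 : (M * M).trace = ∑ i, ∑ j, M i j * M j i := by
    simp [Matrix.trace, Matrix.mul_apply, Matrix.diag]
  have hterm : ∀ i j : Fin p, 0 ≤ M i j * M j i := by
    intro i j
    rcases eq_or_ne i j with rfl | hij
    · exact mul_self_nonneg _
    · rcases Classical.em ((j, i) ∈ E) with hji | hji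
      · rw [hM i j (hsimple j i (Ne.symm hij) hji), mul_zero]
      · rw [hM j i hji, zero_mul]
  have hnn : 0 ≤ (M * M).trace := by
    rw [htr4]
    exact Finset.sum_nonneg fun i _ => Finset.sum_nonneg fun j _ => hterm i j
  have hsq : ∑ i, ∑ j, (N j i) ^ 2 = 0 := by
    have h7 : (M * M).trace = -(∑ i, ∑ j, (N j i) ^ 2) := by rw [htr1, htr2, htr3]
    have h8 : 0 ≤ ∑ i, ∑ j, (N j i) ^ 2 :=
      Finset.sum_nonneg fun i _ => Finset.sum_nonneg fun j _ => sq_nonneg _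
    linarith
  have hN0 : N = 0 := by
    ext i j
    have h9 : ∀ i ∈ Finset.univ, ∑ j, (N j i) ^ 2 = 0 := by
      intro i _
      have := (Finset.sum_eq_zero_iff_of_nonneg
        (fun i _ => Finset.sum_nonneg fun j _ => sq_nonneg (N j i))).1 hsq
      exact this i (Finset.mem_univ i)
    have h10 := (Finset.sum_eq_zero_iff_of_nonneg
      (fun k _ => sq_nonneg (N k j))).1 (h9 j (Finset.mem_univ j)) i (Finset.mem_univ i)
    simpa using pow_eq_zero_iff (n := 2) (by norm_num) |>.1 h10
  have : M = W * N * W⁻¹ := by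
    rw [hNdef]
    simp only [Matrix.mul_assoc]
    rw [Matrix.mul_nonsing_inv_cancel_left _ _ hdet, hWWinv, Matrix.mul_one]
  rw [this, hN0, Matrix.mul_zero, Matrix.zero_mul]

/-- The Lyapunov bilinear map `(S, M) ↦ M * S + S * Mᵀ`. -/
def lyapBil (n : Type*) [Fintype n] [DecidableEq n] :
    Matrix n n ℝ →ₗ[ℝ] Matrix n n ℝ →ₗ[ℝ] Matrix n n ℝ where
  toFun S :=
    { toFun := fun M => M * S + S * Mᵀ
      map_add' := fun M1 M2 => by
        simp only [Matrix.add_mul, Matrix.mul_add, Matrix.transpose_add]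
        abel
      map_smul' := fun c M => by
        simp only [Matrix.transpose_smul, Matrix.smul_mul, Matrix.mul_smul, smul_add,
          RingHom.id_apply] }
  map_add' S1 S2 := by
    apply LinearMap.ext
    intro M
    simp only [LinearMap.coe_mk, AddHom.coe_mk, LinearMap.add_apply, Matrix.add_mul,
      Matrix.mul_add]
    abel
  map_smul' c S := by
    apply LinearMap.ext
    intro M
    simp only [LinearMap.coe_mk, AddHom.coe_mk, LinearMap.smul_apply, Matrix.smul_mul,
      Matrix.mul_smul, smul_add, RingHom.id_apply]

/-- The support submodule `ℝ^E`. -/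
def suppSubmodule {p : ℕ} (E : Set (Fin p × Fin p)) :
    Submodule ℝ (Matrix (Fin p) (Fin p) ℝ) where
  carrier := {M | InSupp E M}
  add_mem' := fun {A B} hA hB i j hij => by
    show A j i + B j i = 0
    rw [hA i j hij, hB i j hij, add_zero]
  zero_mem' := fun i j _ => rfl
  smul_mem' := fun c A hA i j hij => by
    show c * A j i = 0
    rw [hA i j hij, mul_zero]

section Limit

attribute [local instance] Matrix.seminormedAddCommGroup Matrix.normedAddCommGroup Matrix.normedSpace

set_option maxHeartbeats 1000000 in
theorem lyap_limit {p : ℕ} (E : Set (Fin p × Fin p)) (hsimple : IsSimpleDigraph E)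
    (C : Matrix (Fin p) (Fin p) ℝ)
    (u : ℕ → Matrix (Fin p) (Fin p) ℝ) (S : Matrix (Fin p) (Fin p) ℝ) (hS : S.PosDef)
    (hsol : ∀ n, ∃ M, InSupp E M ∧ M * u n + u n * Mᵀ + C = 0)
    (hconv : Tendsto u atTop (nhds S)) :
    ∃ M, InSupp E M ∧ M * S + S * Mᵀ + C = 0 := by
  classical
  set V := suppSubmodule E with hV
  -- bundle the bilinear map as a continuous bilinear map
  letI : TopologicalSpace (Matrix (Fin p) (Fin p) ℝ) :=
    PseudoMetricSpace.toUniformSpace.toTopologicalSpace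
  let B : Matrix (Fin p) (Fin p) ℝ →L[ℝ] Matrix (Fin p) (Fin p) ℝ →L[ℝ]
      Matrix (Fin p) (Fin p) ℝ :=
    LinearMap.toContinuousLinearMap
      (LinearMap.toContinuousLinearMap.toLinearMap.comp (lyapBil (Fin p)))
  have hB : ∀ S' M' : Matrix (Fin p) (Fin p) ℝ, B S' M' = M' * S' + S' * M'ᵀ := by
    intro S' M'
    simp only [B, LinearMap.coe_toContinuousLinearMap', LinearMap.coe_comp,
      LinearEquiv.coe_coe, Function.comp_apply]
    rfl
  clear_value B
  -- the restriction of `B S` to `V` is injective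
  let T : V →ₗ[ℝ] Matrix (Fin p) (Fin p) ℝ := ((B S).toLinearMap).comp V.subtype
  have hTker : LinearMap.ker T = ⊥ := by
    rw [LinearMap.ker_eq_bot']
    intro m hm
    have h1 : (m : Matrix (Fin p) (Fin p) ℝ) * S + S * (m : Matrix (Fin p) (Fin p) ℝ)ᵀ = 0 := by
      have := hm
      simp only [T, LinearMap.comp_apply, Submodule.subtype_apply,
        ContinuousLinearMap.coe_coe] at this
      rw [hB] at this
      exact this
    have h2 : (m : Matrix (Fin p) (Fin p) ℝ) = 0 := lyap_inj hsimple hS m.2 h1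
    exact Subtype.ext h2
  obtain ⟨K, hK0, hK⟩ := T.exists_antilipschitzWith hTker
  have hKx : ∀ x : V, ‖x‖ ≤ (K : ℝ) * ‖B S (x : Matrix (Fin p) (Fin p) ℝ)‖ := by
    intro x
    have h3 := hK.le_mul_dist x 0
    have h4 : T 0 = 0 := map_zero T
    rw [dist_zero_right, h4, dist_zero_right] at h3
    exact h3
  choose M hM1 hM2 using hsol
  set v : ℕ → V := fun n => ⟨M n, hM1 n⟩ with hv
  have heq : ∀ n, B (u n) (M n) = -C := by
    intro n
    rw [hB]
    exact eq_neg_of_add_eq_zero_left (hM2 n)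
  -- a bound on the norms, eventually
  have hnb0' : (0:ℝ) ≤ ‖B‖ := ContinuousLinearMap.opNorm_nonneg B
  have hnc0' : (0:ℝ) ≤ ‖C‖ := norm_nonneg _
  set k : ℝ := (K : ℝ) with hk
  have hkpos : 0 < k := by exact_mod_cast hK0
  set nb : ℝ := ‖B‖ with hnb
  have hnb0 : 0 ≤ nb := hnb0'
  set nc : ℝ := ‖C‖ with hnc
  have hnc0 : 0 ≤ nc := hnc0' 
  set ε : ℝ := 1 / (2 * (k + 1) * (nb + 1)) with hε
  have hεpos : 0 < ε := by positivity
  set R : ℝ := 2 * k * nc + 1 with hR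
  have hev : ∀ᶠ n in atTop, v n ∈ Metric.closedBall (0 : V) R := by
    have h5 : ∀ᶠ n in atTop, dist (u n) S < ε := hconv (Metric.ball_mem_nhds S hεpos)
    filter_upwards [h5] with n hn
    rw [Metric.mem_closedBall, dist_zero_right]
    -- bound ‖v n‖
    have h6 : ‖(v n : V)‖ ≤ k * ‖B S (M n)‖ := hKx (v n)
    have h7 : B S (M n) = B (S - u n) (M n) + -C := by
      rw [← heq n, map_sub, ContinuousLinearMap.sub_apply]
      abel
    have h8 : ‖B S (M n)‖ ≤ nb * ‖S - u n‖ * ‖M n‖ + nc := by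
      rw [h7]
      refine (norm_add_le _ _).trans ?_
      rw [norm_neg]
      exact add_le_add_left (B.le_opNorm₂ (S - u n) (M n)) nc
    have h9 : ‖S - u n‖ < ε := by
      rw [norm_sub_rev, ← dist_eq_norm]
      exact hn
    have h10 : ‖(v n : V)‖ = ‖M n‖ := rfl
    have hm0 : 0 ≤ ‖M n‖ := norm_nonneg _
    have h9' : 0 ≤ ‖S - u n‖ := norm_nonneg _
    have h11 : k * (nb * ε) ≤ 1 / 2 := by
      have hD : (0:ℝ) < 2 * (k + 1) * (nb + 1) := by positivity
      rw [hε, show k * (nb * (1 / (2 * (k + 1) * (nb + 1))))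
          = (k * nb) / (2 * (k + 1) * (nb + 1)) from by ring, div_le_iff₀ hD]
      nlinarith [hkpos.le, hnb0]
    have h12 : ‖M n‖ ≤ k * (nb * ‖S - u n‖ * ‖M n‖) + k * nc := by
      rw [← h10, ← mul_add]
      exact h6.trans (mul_le_mul_of_nonneg_left h8 hkpos.le)
    have h13 : k * (nb * ‖S - u n‖ * ‖M n‖) ≤ 1 / 2 * ‖M n‖ := by
      have e1 : k * (nb * ‖S - u n‖ * ‖M n‖) = k * (nb * ‖S - u n‖) * ‖M n‖ := by ring
      have e2 : k * (nb * ‖S - u n‖) ≤ k * (nb * ε) :=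
        mul_le_mul_of_nonneg_left (mul_le_mul_of_nonneg_left h9.le hnb0) hkpos.le
      rw [e1]
      exact mul_le_mul_of_nonneg_right (e2.trans h11) hm0
    rw [h10, hR]
    linarith [h12, h13, mul_nonneg hkpos.le hnc0]
  -- extract a convergent subsequence
  obtain ⟨a, -, φ, hφ, hav⟩ :=
    tendsto_subseq_of_frequently_bounded (Metric.isBounded_closedBall (x := (0 : V)) (r := R))
      hev.frequently
  have h1 : Tendsto (fun j => u (φ j)) atTop (nhds S) := hconv.comp hφ.tendsto_atTop
  have h2 : Tendsto (fun j => ((v (φ j) : V) : Matrix (Fin p) (Fin p) ℝ)) atTop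
      (nhds (a : Matrix (Fin p) (Fin p) ℝ)) :=
    ((V.subtypeL.continuous.tendsto a).comp hav)
  have h3 : Tendsto (fun j => B (u (φ j)) (M (φ j))) atTop
      (nhds (B S (a : Matrix (Fin p) (Fin p) ℝ))) := by
    have hc := B.isBoundedBilinearMap.continuous
    exact (hc.tendsto (S, (a : Matrix (Fin p) (Fin p) ℝ))).comp (h1.prodMk_nhds h2)
  have h4 : B S (a : Matrix (Fin p) (Fin p) ℝ) = -C := by
    refine tendsto_nhds_unique h3 ?_
    have : (fun j => B (u (φ j)) (M (φ j))) = fun _ => -C := funext fun j => heq (φ j)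
    rw [this]
    exact tendsto_const_nhds
  refine ⟨(a : Matrix (Fin p) (Fin p) ℝ), a.2, ?_⟩
  rw [← hB S (a : Matrix (Fin p) (Fin p) ℝ), h4]
  simp

end Limit

/-- for a simple graph (with all self-loops) and symmetric positive
definite `C`, the model `M_{G,C}` is relatively closed in the positive definite
matrices. -/
theorem simple_model_closed_in_posdef {p : ℕ}
    (E : Set (Fin p × Fin p)) (hloops : ∀ i : Fin p, (i, i) ∈ E)
    (hsimple : IsSimpleDigraph E)
    (C : Matrix (Fin p) (Fin p) ℝ) (hC : C.PosDef) :
    IsClosed {S : {A : Matrix (Fin p) (Fin p) ℝ // A.PosDef} |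
      (S : Matrix (Fin p) (Fin p) ℝ) ∈ LyapModel E C} := by
  haveI : FirstCountableTopology (Matrix (Fin p) (Fin p) ℝ) :=
    inferInstanceAs (FirstCountableTopology (Fin p → Fin p → ℝ))
  refine IsSeqClosed.isClosed ?_
  intro u S hu hus
  have hconv : Filter.Tendsto (fun n => (u n : Matrix (Fin p) (Fin p) ℝ)) Filter.atTop
      (nhds (S : Matrix (Fin p) (Fin p) ℝ)) := (continuous_subtype_val.tendsto S).comp hus
  obtain ⟨M, h1, h2⟩ := lyap_limit E hsimple C _ _ S.2 (fun n => (hu n).2) hconv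
  exact ⟨S.2, M, h1, h2⟩
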